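/- Let X be a finite set with |X| ≥ 3. If S is a commutative nilpotent subsemigroup of T(X) with |S| = ξ(|X|), then the zero of S is a constant map (rank 1), and there exist distinct elements x_1, ..., x_t ∈ X with t = α(|X|) such that S = {β ∈ T(X) : x_jβ = x_1 for all j ∈ {1,...,t} and im(β) ⊆ {x_1,...,x_t}}. -/

import Mathlib

/-- `S` is a subsemigroup of the full transformation semigroup on `X`
(maps act on the right, so the product `β·γ` is `γ ∘ β`). -/
def IsTransSub {X : Type*} (S : Set (X → X)) : Prop :=
  ∀ β ∈ S, ∀ γ ∈ S, (γ ∘ β) ∈ S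

/-- `e` is a zero element of `S`: `βe = eβ = e` for all `β ∈ S`. -/
def IsZeroElem {X : Type*} (S : Set (X → X)) (e : X → X) : Prop :=
  e ∈ S ∧ ∀ β ∈ S, e ∘ β = e ∧ β ∘ e = e

/-- `S` is nilpotent with zero `e`: some `m ≥ 1` such that every product of
`m` elements of `S` equals `e`. -/
def IsNilpotentSub {X : Type*} (S : Set (X → X)) (e : X → X) : Prop :=
  ∃ m : ℕ, 0 < m ∧ ∀ L : List (X → X), L.length = m → (∀ f ∈ L, f ∈ S) →
    L.foldr (· ∘ ·) id = e

/-- `S` is commutative. -/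
def IsCommSub {X : Type*} (S : Set (X → X)) : Prop :=
  ∀ β ∈ S, ∀ γ ∈ S, β ∘ γ = γ ∘ β

/-- `S` is a null semigroup with zero `e`: every product of two elements is `e`. -/
def IsNullSub {X : Type*} (S : Set (X → X)) (e : X → X) : Prop :=
  ∀ β ∈ S, ∀ γ ∈ S, γ ∘ β = e

/-- `ξ(n) = max { t ^ (n - t) : 1 ≤ t ≤ n }`. -/
def xi (n : ℕ) : ℕ := (Finset.Icc 1 n).sup (fun t => t ^ (n - t))

/-- `α(n) = max { t ∈ {1,…,n} : t ^ (n - t) = ξ(n) }`. -/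
def alphaMax (n : ℕ) : ℕ :=
  ((Finset.Icc 1 n).filter (fun t => t ^ (n - t) = xi n)).sup id

lemma logconcave (n t : ℕ) (ht : 1 ≤ t) (htn : t + 2 ≤ n) :
    t ^ (n - t) * (t + 2) ^ (n - (t + 2)) < ((t + 1) ^ (n - (t + 1))) ^ 2 := by
  set a := n - (t + 2) with ha
  have h1 : n - t = a + 2 := by omega
  have h2 : n - (t + 1) = a + 1 := by omega
  rw [h1, h2]
  have e1 : t ^ (a + 2) * (t + 2) ^ a = t ^ 2 * (t * (t + 2)) ^ a := by
    rw [mul_pow]; ring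
  have e2 : ((t + 1) ^ (a + 1)) ^ 2 = (t + 1) ^ 2 * ((t + 1) ^ 2) ^ a := by
    rw [← pow_mul, ← pow_mul, ← pow_add]; ring_nf
  rw [e1, e2]
  have hb : t * (t + 2) < (t + 1) ^ 2 := by nlinarith
  have hmono : (t * (t + 2)) ^ a ≤ ((t + 1) ^ 2) ^ a := Nat.pow_le_pow_left hb.le a
  have hpos : 0 < ((t + 1) ^ 2) ^ a := Nat.pow_pos (by positivity)
  calc t ^ 2 * (t * (t + 2)) ^ a ≤ t ^ 2 * ((t + 1) ^ 2) ^ a :=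
        Nat.mul_le_mul_left _ hmono
    _ < (t + 1) ^ 2 * ((t + 1) ^ 2) ^ a := by
        apply Nat.mul_lt_mul_of_lt_of_le (by nlinarith) le_rfl hpos
  
lemma noadjtie (n t : ℕ) (hn : 3 ≤ n) (ht : 1 ≤ t) (htn : t + 1 ≤ n) :
    t ^ (n - t) ≠ (t + 1) ^ (n - (t + 1)) := by
  intro h
  set k := n - (t + 1) with hk
  have h1 : n - t = k + 1 := by omega
  rw [h1] at h
  have hcop : Nat.Coprime t (t + 1) := by simp [Nat.Coprime]
  have hcop2 : Nat.Coprime (t ^ (k + 1)) ((t + 1) ^ k) := Nat.Coprime.pow _ _ hcop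
  rw [h] at hcop2
  have h2 : (t + 1) ^ k = 1 := by simpa [Nat.Coprime] using hcop2
  have h3 : k = 0 := by
    by_contra hk0
    have := Nat.one_lt_pow hk0 (by omega : 1 < t + 1)
    omega
  have h4 : t = 1 := by
    rw [h3] at h; simpa using h
  omega

lemma gpos (n t : ℕ) (ht : 1 ≤ t) : 0 < t ^ (n - t) := Nat.pow_pos ht

lemma descent (n : ℕ) (i : ℕ) (hi : 1 ≤ i)
    (hdec : (i + 1) ^ (n - (i + 1)) < i ^ (n - i)) :
    ∀ j, i + 1 + j ≤ n → (i + j + 1) ^ (n - (i + j + 1)) < (i + j) ^ (n - (i + j)) := by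
  intro j
  induction j with
  | zero => intro _; simpa using hdec
  | succ j ih =>
    intro hjn
    have ihj := ih (by omega)
    have hlc := logconcave n (i + j) (by omega) (by omega)
    -- (i+j)^(n-(i+j)) * (i+j+2)^(n-(i+j+2)) < ((i+j+1)^(n-(i+j+1)))^2
    have key : (i + j + 1) ^ (n - (i + j + 1)) * (i + j + 2) ^ (n - (i + j + 2)) <
        (i + j + 1) ^ (n - (i + j + 1)) * (i + j + 1) ^ (n - (i + j + 1)) := by
      calc (i + j + 1) ^ (n - (i + j + 1)) * (i + j + 2) ^ (n - (i + j + 2))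
          ≤ (i + j) ^ (n - (i + j)) * (i + j + 2) ^ (n - (i + j + 2)) :=
            Nat.mul_le_mul_right _ ihj.le
        _ < ((i + j + 1) ^ (n - (i + j + 1))) ^ 2 := hlc
        _ = _ := sq _
    have := Nat.lt_of_mul_lt_mul_left key
    have heq1 : i + (j + 1) + 1 = i + j + 2 := by omega
    have heq2 : i + (j + 1) = i + j + 1 := by omega
    rw [heq1, heq2]
    exact this

lemma no_two (n : ℕ) (hn : 3 ≤ n) (s t : ℕ) (hs1 : 1 ≤ s) (hst : s < t) (htn : t ≤ n)
    (hs : s ^ (n - s) = xi n) (ht : t ^ (n - t) = xi n) : False := by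
  have hs1n : s + 1 ≤ n := by omega
  have hle : (s + 1) ^ (n - (s + 1)) ≤ xi n :=
    Finset.le_sup (f := fun t => t ^ (n - t)) (Finset.mem_Icc.mpr ⟨by omega, hs1n⟩)
  have hne := noadjtie n s hn hs1 hs1n
  have hdec : (s + 1) ^ (n - (s + 1)) < s ^ (n - s) := by
    rw [hs]; exact lt_of_le_of_ne hle (fun h => hne (hs.trans h.symm))
  have hd := descent n s hs1 hdec (t - s - 1) (by omega)
  have he1 : s + (t - s - 1) + 1 = t := by omega
  have he2 : s + (t - s - 1) = t - 1 := by omega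
  rw [he1, he2] at hd
  have hle2 : (t - 1) ^ (n - (t - 1)) ≤ xi n :=
    Finset.le_sup (f := fun t => t ^ (n - t)) (Finset.mem_Icc.mpr ⟨by omega, by omega⟩)
  rw [ht] at hd
  omega

lemma eq_alphaMax (n : ℕ) (hn : 3 ≤ n) (w : ℕ) (hw1 : 1 ≤ w) (hwn : w ≤ n)
    (hw : w ^ (n - w) = xi n) : w = alphaMax n := by
  have hmem : w ∈ (Finset.Icc 1 n).filter (fun t => t ^ (n - t) = xi n) :=
    Finset.mem_filter.mpr ⟨Finset.mem_Icc.mpr ⟨hw1, hwn⟩, hw⟩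
  have huniq : ∀ t ∈ (Finset.Icc 1 n).filter (fun t => t ^ (n - t) = xi n), t = w := by
    intro t htm
    obtain ⟨htI, hteq⟩ := Finset.mem_filter.mp htm
    obtain ⟨ht1, htn⟩ := Finset.mem_Icc.mp htI
    rcases lt_trichotomy t w with h | h | h
    · exact absurd (no_two n hn t w ht1 h hwn hteq hw) (fun x => x)
    · exact h
    · exact absurd (no_two n hn w t hw1 h htn hw hteq) (fun x => x)
  have hfe : (Finset.Icc 1 n).filter (fun t => t ^ (n - t) = xi n) = {w} := by
    apply Finset.eq_singleton_iff_unique_mem.mpr ⟨hmem, huniq⟩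
  rw [alphaMax, hfe, Finset.sup_singleton, id]

section Main

variable {X : Type*} [Fintype X] (S : Set (X → X))

-- commuting with products
lemma comm_prod (hcomm : IsCommSub S) :
    ∀ L : List (X → X), (∀ f ∈ L, f ∈ S) → ∀ β ∈ S, ∀ x : X,
      β (L.foldr (· ∘ ·) id x) = L.foldr (· ∘ ·) id (β x) := by
  intro L
  induction L with
  | nil => intro _ β _ x; rfl
  | cons f L ih =>
    intro hmem β hβ x
    have hf : f ∈ S := hmem f (by simp)
    have hL : ∀ g ∈ L, g ∈ S := fun g hg => hmem g (by simp [hg])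
    show β (f (L.foldr (· ∘ ·) id x)) = f (L.foldr (· ∘ ·) id (β x))
    rw [← ih hL β hβ x]
    exact congrFun (hcomm β hβ f hf) (L.foldr (· ∘ ·) id x)

lemma foldr_replicate_fix (β : X → X) (z : X) (hz : β z = z) :
    ∀ k, (List.replicate k β).foldr (· ∘ ·) id z = z := by
  intro k
  induction k with
  | zero => rfl
  | succ k ih =>
    show β ((List.replicate k β).foldr (· ∘ ·) id z) = z
    rw [ih, hz]


set_option linter.unusedSectionVars false

lemma determined (hcomm : IsCommSub S) (e : X → X) (he : IsZeroElem S e)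
    (m : ℕ) (hm : 0 < m)
    (hprod : ∀ L : List (X → X), L.length = m → (∀ f ∈ L, f ∈ S) →
      L.foldr (· ∘ ·) id = e)
    (β : X → X) (hβ : β ∈ S) (γ : X → X) (hγ : γ ∈ S)
    (h : ∀ z : X, z ∉ (⋃ δ ∈ S, Set.range δ) → β z = γ z) : β = γ := by
  classical
  set W : Set X := ⋃ δ ∈ S, Set.range δ with hW
  have hfix : ∀ σ ∈ S, ∀ x : X, σ (e x) = e x := by
    intro σ hσ x
    exact congrFun (he.2 σ hσ).2 x
  have aux : ∀ k (L : List (X → X)) (y : X), L.length + k = m →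
      (∀ f ∈ L, f ∈ S) → β (L.foldr (· ∘ ·) id y) = γ (L.foldr (· ∘ ·) id y) := by
    intro k
    induction k with
    | zero =>
      intro L y hlen hmem
      rw [hprod L (by omega) hmem]
      rw [hfix β hβ y, hfix γ hγ y]
    | succ k ih =>
      intro L y hlen hmem
      by_cases hy : y ∈ W
      · rw [hW, Set.mem_iUnion₂] at hy
        obtain ⟨δ, hδ, z, hz⟩ := hy
        have hrw : L.foldr (· ∘ ·) id y = (L ++ [δ]).foldr (· ∘ ·) id z := by
          rw [List.foldr_append]
          have : ([δ].foldr (· ∘ ·) id) z = y := by simpa using hz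
          simp only [List.foldr_cons, List.foldr_nil] at this ⊢
          have h2 : ∀ (M : List (X → X)) (g : X → X) (u : X),
              M.foldr (· ∘ ·) g u = M.foldr (· ∘ ·) id (g u) := by
            intro M
            induction M with
            | nil => intro g u; rfl
            | cons f M ihM =>
              intro g u
              show f (M.foldr (· ∘ ·) g u) = f (M.foldr (· ∘ ·) id (g u))
              rw [ihM]
          rw [h2 L (δ ∘ id) z]
          simp only [Function.comp_apply, id_eq]
          rw [hz]
        rw [hrw]
        apply ih (L ++ [δ]) z (by simp; omega)
        intro f hf
        rcases List.mem_append.mp hf with hf | hf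
        · exact hmem f hf
        · have : f = δ := by simpa using hf
          rwa [this]
      · rw [comm_prod S hcomm L hmem β hβ y, comm_prod S hcomm L hmem γ hγ y, h y hy]
  funext u
  by_cases hu : u ∈ W
  · rw [hW, Set.mem_iUnion₂] at hu
    obtain ⟨δ, hδ, z, hz⟩ := hu
    have h1 : ([δ].foldr (· ∘ ·) id) z = u := by simpa using hz
    have h2 := aux (m - 1) [δ] z (by simp; omega) (by simpa using hδ)
    rwa [h1] at h2
  · exact h u hu

end Main



theorem stmt13 {X : Type*} [Fintype X] (hX : 3 ≤ Fintype.card X)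
    (S : Set (X → X)) (hS : IsTransSub S) (hcomm : IsCommSub S)
    (e : X → X) (he : IsZeroElem S e) (hnil : IsNilpotentSub S e)
    (hcard : S.ncard = xi (Fintype.card X)) :
    (∃ c : X, e = Function.const X c) ∧
    ∃ (t : ℕ) (x : Fin t → X), t = alphaMax (Fintype.card X) ∧
      Function.Injective x ∧ 1 ≤ t ∧
      S = {β : X → X | (∀ j : Fin t, ∃ h1 : 0 < t, β (x j) = x ⟨0, h1⟩) ∧
            Set.range β ⊆ Set.range x} := by

  classical
  obtain ⟨m, hm, hprod⟩ := hnil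
  set n := Fintype.card X with hn
  set W : Set X := ⋃ δ ∈ S, Set.range δ with hW
  have hrange : ∀ β ∈ S, ∀ x : X, β x ∈ W := by
    intro β hβ x
    rw [hW, Set.mem_iUnion₂]; exact ⟨β, hβ, x, rfl⟩
  have hfix : ∀ σ ∈ S, ∀ x : X, σ (e x) = e x := fun σ hσ x => congrFun (he.2 σ hσ).2 x
  have hdet : ∀ β ∈ S, ∀ γ ∈ S, (∀ z, z ∉ W → β z = γ z) → β = γ :=
    fun β hβ γ hγ h => determined S hcomm e he m hm hprod β hβ γ hγ h
  have hX0 : 0 < n := by omega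
  have hne0 : Nonempty X := Fintype.card_pos_iff.mp hX0
  obtain ⟨x₀⟩ := hne0
  set w := W.ncard with hwdef
  have hw1 : 1 ≤ w := by
    have : 0 < W.ncard := (Set.ncard_pos (W.toFinite)).mpr ⟨e x₀, hrange e he.1 x₀⟩
    omega
  have hncardX : Nat.card X = n := Nat.card_eq_fintype_card
  have hwn : w ≤ n := by
    have := Set.ncard_le_ncard (Set.subset_univ W) Set.finite_univ
    rw [Set.ncard_univ, hncardX] at this
    exact this
  have hcompl : Wᶜ.ncard = n - w := by
    have := Set.ncard_add_ncard_compl W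
    rw [hncardX] at this
    omega
  have hfun : Nat.card ((↥(Wᶜ)) → ↥W) = w ^ (n - w) := by
    rw [Nat.card_fun, Nat.card_coe_set_eq, Nat.card_coe_set_eq, hcompl]
  set F : ↥S → (↥(Wᶜ) → ↥W) := fun β z => ⟨β.1 z.1, hrange β.1 β.2 z.1⟩ with hF
  have hFinj : Function.Injective F := by
    intro β γ h
    apply Subtype.ext
    apply hdet β.1 β.2 γ.1 γ.2
    intro z hz
    exact Subtype.ext_iff.mp (congrFun h ⟨z, hz⟩)
  have hSle : S.ncard ≤ w ^ (n - w) := by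
    have := Nat.card_le_card_of_injective F hFinj
    rwa [Nat.card_coe_set_eq, hfun] at this
  have hxile : w ^ (n - w) ≤ xi n :=
    Finset.le_sup (f := fun t => t ^ (n - t)) (Finset.mem_Icc.mpr ⟨hw1, hwn⟩)
  have heq : w ^ (n - w) = xi n := le_antisymm hxile (hcard ▸ hSle)
  have hwα : w = alphaMax n := eq_alphaMax n hX w hw1 hwn heq
  have hcards : Nat.card ↥S = Nat.card ((↥(Wᶜ)) → ↥W) := by
    rw [Nat.card_coe_set_eq, hfun, hcard, heq]
  have hFbij : Function.Bijective F := (Nat.bijective_iff_injective_and_card F).mpr ⟨hFinj, hcards⟩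
  have hsurj : ∀ f : (↥(Wᶜ)) → ↥W, ∃ β ∈ S, ∀ z : ↥(Wᶜ), β z.1 = (f z).1 := by
    intro f
    obtain ⟨β, hβ⟩ := hFbij.2 f
    exact ⟨β.1, β.2, fun z => by rw [← hβ]⟩
  have key : ∃ c : X, (∀ x, e x = c) ∧ c ∈ W ∧ ∀ β ∈ S, ∀ u ∈ W, β u = c := by
    rcases le_or_gt 2 (n - w) with hd | hd
    · -- Branch A : at least two points outside W
      have h2c : 1 < Wᶜ.ncard := by omega
      obtain ⟨y', hy'W, y, hyW, hne⟩ : ∃ y' ∈ Wᶜ, ∃ y ∈ Wᶜ, y' ≠ y := by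
        obtain ⟨a, ha⟩ : Wᶜ.Nonempty := by
          rw [← Set.ncard_pos]; omega
        obtain ⟨b, hb, hba⟩ := Set.exists_ne_of_one_lt_ncard h2c a
        exact ⟨b, hb, a, ha, hba⟩
      have hyn : y ∉ W := hyW
      have hy'n : y' ∉ W := hy'W
      have claimA : ∀ u : X, u ∈ W → ∃ η ∈ S, (∀ z, z ∉ W → η z = u) ∧
          (∀ a b : X, a ∈ W → b ∈ W → η a = η b) := by
        intro u hu
        obtain ⟨η, hηS, hη⟩ := hsurj (fun _ => ⟨u, hu⟩)
        refine ⟨η, hηS, fun z hz => hη ⟨z, hz⟩, ?_⟩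
        intro a b ha hb
        obtain ⟨β, hβS, hβ⟩ := hsurj (fun z => if z = ⟨y, hyn⟩ then ⟨a, ha⟩ else ⟨b, hb⟩)
        have h1 : β y = a := by
          have := hβ ⟨y, hyn⟩; simpa using this
        have h2 : β y' = b := by
          have h3 := hβ ⟨y', hy'n⟩
          have h4 : (⟨y', hy'n⟩ : ↥(Wᶜ)) ≠ ⟨y, hyn⟩ := by
            simp only [ne_eq, Subtype.mk.injEq]; exact hne
          rw [if_neg h4] at h3
          exact h3
        have hc1 : β (η y) = η (β y) := congrFun (hcomm β hβS η hηS) y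
        have hc2 : β (η y') = η (β y') := congrFun (hcomm β hβS η hηS) y'
        rw [hη ⟨y, hyn⟩, h1] at hc1
        rw [hη ⟨y', hy'n⟩, h2] at hc2
        rw [← hc1, ← hc2]
      have hec : ∀ x x' : X, e x = e x' := by
        intro x x'
        obtain ⟨η, hηS, _, hconst⟩ := claimA (e x) (hrange e he.1 x)
        have h1 := hfix η hηS x
        have h2 := hfix η hηS x'
        have h3 := hconst (e x) (e x') (hrange e he.1 x) (hrange e he.1 x')
        rw [h1, h2] at h3; exact h3
      refine ⟨e x₀, fun x => hec x x₀, hrange e he.1 x₀, ?_⟩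
      intro β hβ u hu
      obtain ⟨η, hηS, hout, hconst⟩ := claimA u hu
      have hηc : η (e x₀) = e x₀ := hfix η hηS x₀
      have h2 : ∀ a, a ∈ W → η a = e x₀ := fun a ha =>
        (hconst a (e x₀) ha (hrange e he.1 x₀)).trans hηc
      have h3 : β (η y) = η (β y) := congrFun (hcomm β hβ η hηS) y
      rw [hout y hyn] at h3
      rw [h3]
      exact h2 _ (hrange β hβ y)
    · -- Branch B : n - w ≤ 1
      have h2xi : 2 ^ (n - 2) ≤ xi n :=
        Finset.le_sup (f := fun t => t ^ (n - t)) (Finset.mem_Icc.mpr ⟨by omega, by omega⟩)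
      have hpow2 : ∀ k, 2 ≤ k → k + 2 ≤ 2 ^ k := by
        intro k hk
        induction k with
        | zero => omega
        | succ k ih =>
          rcases Nat.lt_or_ge k 2 with h | h
          · interval_cases k <;> simp <;> omega
          · have := ih h
            have : 2 ^ k ≤ 2 ^ (k + 1) := Nat.pow_le_pow_right (by omega) (by omega)
            omega
      have h2n2 : 2 ≤ 2 ^ (n - 2) := Nat.one_lt_two_pow (by omega)
      have hd1 : n - w = 1 := by
        rcases Nat.lt_or_ge (n - w) 1 with h | h
        · exfalso
          have h0 : n - w = 0 := by omega
          rw [h0, pow_zero] at heq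
          omega
        · omega
      have hxival : xi n = w := by rw [← heq, hd1, pow_one]
      have hn3 : n = 3 := by
        by_contra hn4
        have h4 : 4 ≤ n := by omega
        have := hpow2 (n - 2) (by omega)
        have hwn1 : w = n - 1 := by omega
        omega
      have hw2 : w = 2 := by omega
      obtain ⟨y, hyeq⟩ : ∃ y, Wᶜ = {y} := Set.ncard_eq_one.mp (by omega)
      have hyn : y ∉ W := by
        have : y ∈ Wᶜ := by rw [hyeq]; rfl
        exact this
      have houts : ∀ z, z ∉ W → z = y := by
        intro z hz
        have : z ∈ Wᶜ := hz
        rw [hyeq] at this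
        exact this
      have hcover : ∀ z : X, z ∈ W ∨ z = y := by
        intro z
        by_cases hz : z ∈ W
        · exact Or.inl hz
        · exact Or.inr (houts z hz)
      have hec : ∀ x x' : X, e x = e x' := by
        by_contra hcon
        push_neg at hcon
        obtain ⟨x, x', hxx⟩ := hcon
        have hsub : ({e x, e x'} : Set X) ⊆ W := by
          intro v hv
          rcases hv with h | h
          · rw [h]; exact hrange e he.1 x
          · rw [h]; exact hrange e he.1 x'
        have hWeq : ({e x, e x'} : Set X) = W :=
          Set.eq_of_subset_of_ncard_le hsub (by rw [Set.ncard_pair hxx]; omega)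
        have hfixW : ∀ β ∈ S, ∀ u ∈ W, β u = u := by
          intro β hβ u hu
          rw [← hWeq] at hu
          rcases hu with h | h
          · rw [h]; exact hfix β hβ x
          · rw [h]; exact hfix β hβ x'
        have hidem : ∀ β ∈ S, β = e := by
          intro β hβ
          have hββ : ∀ z, β (β z) = β z := by
            intro z
            exact hfixW β hβ (β z) (hrange β hβ z)
          have hfold : ∀ k, (List.replicate (k + 1) β).foldr (· ∘ ·) id = β := by
            intro k
            induction k with
            | zero => funext z; rfl
            | succ k ih =>
              funext z
              show β ((List.replicate (k + 1) β).foldr (· ∘ ·) id z) = β z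
              rw [ih]
              exact hββ z
          have hrepm := hprod (List.replicate m β) (by simp)
            (by intro f hf; rw [List.eq_of_mem_replicate hf]; exact hβ)
          obtain ⟨m', rfl⟩ : ∃ m', m = m' + 1 := ⟨m - 1, by omega⟩
          rw [hfold m'] at hrepm
          exact hrepm
        have hle1 : S.ncard ≤ 1 := by
          have hsub1 : S ⊆ {e} := fun β hβ => hidem β hβ
          have := Set.ncard_le_ncard hsub1 (Set.finite_singleton e)
          simpa using this
        omega
      refine ⟨e x₀, fun x => hec x x₀, hrange e he.1 x₀, ?_⟩
      obtain ⟨u, huW, huc⟩ := Set.exists_ne_of_one_lt_ncard (by omega : 1 < W.ncard) (e x₀)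
      have hWpair : ({e x₀, u} : Set X) = W := by
        apply Set.eq_of_subset_of_ncard_le
        · intro v hv
          rcases hv with h | h
          · rw [h]; exact hrange e he.1 x₀
          · rw [h]; exact huW
        · rw [Set.ncard_pair (Ne.symm huc)]; omega
        · exact Set.toFinite W
      intro β hβ v hv
      have hβc : β (e x₀) = e x₀ := hfix β hβ x₀
      rw [← hWpair] at hv
      rcases hv with h | h
      · rw [h]; exact hβc
      · rw [h]
        have hβu : β u ∈ W := hrange β hβ u
        rw [← hWpair] at hβu
        rcases hβu with h2 | h2
        · exact h2
        · exfalso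
          have hfixu := foldr_replicate_fix β u h2 m
          rw [hprod (List.replicate m β) (by simp)
            (by intro f hf; rw [List.eq_of_mem_replicate hf]; exact hβ)] at hfixu
          exact huc ((hec u x₀).symm.trans hfixu).symm
  obtain ⟨c, hec, hcW, hnull⟩ := key
  constructor
  · exact ⟨c, funext fun x => hec x⟩
  haveI : Fintype ↥W := Fintype.ofFinite _
  have hcardW : Fintype.card ↥W = w := by
    rw [← Nat.card_eq_fintype_card, Nat.card_coe_set_eq]
  have hw0 : 0 < w := hw1
  set eq1 : ↥W ≃ Fin w := Fintype.equivFinOfCardEq hcardW with heq1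
  set i : Fin w := eq1 ⟨c, hcW⟩ with hi
  set e2 : Fin w ≃ ↥W := (Equiv.swap ⟨0, hw0⟩ i).trans eq1.symm with he2
  set x : Fin w → X := fun j => (e2 j).1 with hx
  have hx0 : x ⟨0, hw0⟩ = c := by
    show (eq1.symm (Equiv.swap ⟨0, hw0⟩ i ⟨0, hw0⟩)).1 = c
    rw [Equiv.swap_apply_left, hi, Equiv.symm_apply_apply]
  have hxinj : Function.Injective x := fun a b hab => e2.injective (Subtype.ext hab)
  have hxrange : Set.range x = W := by
    have hcomp : Set.range x = Set.range (Subtype.val : ↥W → X) :=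
      Function.Surjective.range_comp e2.surjective Subtype.val
    rw [hcomp, Subtype.range_coe]
  set B : Set (X → X) := {β | (∀ u ∈ W, β u = c) ∧ Set.range β ⊆ W} with hB
  have hSsub : S ⊆ B := by
    intro β hβ
    refine ⟨fun u hu => hnull β hβ u hu, ?_⟩
    rintro v ⟨z, rfl⟩
    exact hrange β hβ z
  have hBle : B.ncard ≤ S.ncard := by
    set G : ↥B → (↥(Wᶜ) → ↥W) := fun β z => ⟨β.1 z.1, β.2.2 (Set.mem_range_self z.1)⟩ with hG
    have hGinj : Function.Injective G := by
      intro β γ h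
      apply Subtype.ext
      funext z
      by_cases hz : z ∈ W
      · rw [β.2.1 z hz, γ.2.1 z hz]
      · exact Subtype.ext_iff.mp (congrFun h ⟨z, hz⟩)
    have hle := Nat.card_le_card_of_injective G hGinj
    rw [Nat.card_coe_set_eq, hfun] at hle
    rw [hcard, ← heq]
    exact hle
  have hSB : S = B := Set.eq_of_subset_of_ncard_le hSsub hBle
  refine ⟨w, x, hwα, hxinj, hw1, ?_⟩
  ext β
  rw [hSB]
  simp only [hB, Set.mem_setOf_eq]
  constructor
  · rintro ⟨h1, h2⟩
    refine ⟨fun j => ⟨hw0, ?_⟩, by rwa [hxrange]⟩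
    rw [hx0]
    exact h1 (x j) (by rw [← hxrange]; exact Set.mem_range_self j)
  · rintro ⟨h1, h2⟩
    refine ⟨?_, by rwa [hxrange] at h2⟩
    intro u hu
    rw [← hxrange] at hu
    obtain ⟨j, rfl⟩ := hu
    obtain ⟨hp, hj⟩ := h1 j
    exact hj.trans hx0
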